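/- arXiv:1702.01812 — 2 statements merged into one kernel-verified Lean document; each statement's English description precedes it below -/
import Mathlib

section
/- Let n ≥ 3, let E_n = {{i,j} : 1 ≤ i < j ≤ n}, and consider the exponential-family pmf on {0,1}^{E_n} given by p(x) = exp(θ₁·s₁(x) + θ₂·T(x))/Z, where s₁(x) = ∑_{i<j} x_{ij} is the edge count, T(x) = ∑_{i<j} x_{ij} · max_{h ≠ i,j} (x_{ih}·x_{jh}) is the transitive-edge count, θ₁ ∈ ℝ, θ₂ ≥ 0, and Z is the normalizing sum. For every edge e = {i,j} ∈ E_n and every x ∈ {0,1}^{E_n}, the conditional probability π_e(x) = p(x^{e,1})/(p(x^{e,1}) + p(x^{e,0})) of the edge e given the remaining edge variables satisfies 1/(1 + exp(−θ₁)) ≤ π_e(x) ≤ 1/(1 + exp(−θ₁ − θ₂·(2n − 3))). -/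
open scoped BigOperators

/-- The edge set of the complete graph on `n` vertices, encoded as ordered pairs
`(i, j)` with `i < j`. -/
abbrev EdgeIdx (n : ℕ) : Type := {q : Fin n × Fin n // q.1 < q.2}

/-- A binary undirected graph configuration on `n` vertices. -/
abbrev GraphCfg (n : ℕ) : Type := EdgeIdx n → Bool

/-- Symmetric edge indicator `x_{ij}` of a configuration. -/
def edgeVal {n : ℕ} (x : GraphCfg n) (i j : Fin n) : Bool :=
  if h : i < j then x ⟨(i, j), h⟩ else if h : j < i then x ⟨(j, i), h⟩ else false

/-- The edge count `s₁(x) = ∑_{i<j} x_{ij}`. -/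
def edgeCount {n : ℕ} (x : GraphCfg n) : ℝ :=
  ∑ e : EdgeIdx n, if x e then (1 : ℝ) else 0

/-- The transitive-edge count
`T(x) = ∑_{i<j} x_{ij} · max_{h ≠ i,j} (x_{ih}·x_{jh})`. -/
def transEdges {n : ℕ} (x : GraphCfg n) : ℝ :=
  ∑ e : EdgeIdx n,
    if x e = true ∧ ∃ h : Fin n, h ≠ e.1.1 ∧ h ≠ e.1.2 ∧
        edgeVal x e.1.1 h = true ∧ edgeVal x e.1.2 h = true then (1 : ℝ) else 0

section aux

variable {n : ℕ}

/-- The transitive-indicator term of a single edge. -/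
def tterm (x : GraphCfg n) (f : EdgeIdx n) : ℝ :=
  if x f = true ∧ ∃ h : Fin n, h ≠ f.1.1 ∧ h ≠ f.1.2 ∧
      edgeVal x f.1.1 h = true ∧ edgeVal x f.1.2 h = true then (1 : ℝ) else 0

lemma transEdges_eq_sum (x : GraphCfg n) : transEdges x = ∑ f : EdgeIdx n, tterm x f := rfl

lemma tterm_nonneg (x : GraphCfg n) (f : EdgeIdx n) : 0 ≤ tterm x f := by
  unfold tterm; split_ifs <;> norm_num

lemma tterm_le_one (x : GraphCfg n) (f : EdgeIdx n) : tterm x f ≤ 1 := by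
  unfold tterm; split_ifs <;> norm_num

lemma edgeVal_update_of_ne (x : GraphCfg n) (e : EdgeIdx n) (v : Bool)
    (a h : Fin n) (h1 : a ≠ e.1.1) (h2 : a ≠ e.1.2) :
    edgeVal (Function.update x e v) a h = edgeVal x a h := by
  unfold edgeVal
  split_ifs with h' h''
  · exact Function.update_of_ne (fun heq => h1 (by simpa using congrArg (fun q => q.1.1) heq)) _ _
  · exact Function.update_of_ne (fun heq => h2 (by simpa using congrArg (fun q => q.1.2) heq)) _ _
  · rfl

lemma edgeVal_mono {x y : GraphCfg n} (hxy : ∀ f, x f = true → y f = true)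
    (a h : Fin n) (hv : edgeVal x a h = true) : edgeVal y a h = true := by
  unfold edgeVal at *
  split_ifs at hv ⊢
  all_goals exact hxy _ hv

lemma tterm_mono {x y : GraphCfg n} (hxy : ∀ f, x f = true → y f = true)
    (f : EdgeIdx n) : tterm x f ≤ tterm y f := by
  unfold tterm
  by_cases hc : x f = true ∧ ∃ h : Fin n, h ≠ f.1.1 ∧ h ≠ f.1.2 ∧
      edgeVal x f.1.1 h = true ∧ edgeVal x f.1.2 h = true
  · obtain ⟨h1, h, ha, hb, hc1, hc2⟩ := hc
    rw [if_pos ⟨h1, h, ha, hb, hc1, hc2⟩,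
      if_pos ⟨hxy _ h1, h, ha, hb, edgeVal_mono hxy _ _ hc1, edgeVal_mono hxy _ _ hc2⟩]
  · rw [if_neg hc]
    split_ifs <;> norm_num

lemma update_le (x : GraphCfg n) (e : EdgeIdx n) :
    ∀ f, (Function.update x e false) f = true → (Function.update x e true) f = true := by
  intro f hf
  by_cases h : f = e
  · subst h; simp
  · rwa [Function.update_of_ne h] at hf ⊢

lemma tterm_update_of_untouched (x : GraphCfg n) (e : EdgeIdx n) (v w : Bool)
    (f : EdgeIdx n) (h1 : f.1.1 ≠ e.1.1) (h2 : f.1.1 ≠ e.1.2)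
    (h3 : f.1.2 ≠ e.1.1) (h4 : f.1.2 ≠ e.1.2) :
    tterm (Function.update x e v) f = tterm (Function.update x e w) f := by
  have hfe : f ≠ e := fun h => h1 (by rw [h])
  unfold tterm
  rw [Function.update_of_ne hfe, Function.update_of_ne hfe]
  have key : ∀ u : Bool, ∀ h : Fin n,
      (edgeVal (Function.update x e u) f.1.1 h = edgeVal x f.1.1 h) ∧
      (edgeVal (Function.update x e u) f.1.2 h = edgeVal x f.1.2 h) :=
    fun u h => ⟨edgeVal_update_of_ne x e u _ h h1 h2, edgeVal_update_of_ne x e u _ h h3 h4⟩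
  simp only [(key v _).1, (key v _).2, (key w _).1, (key w _).2]

lemma card_incident (i : Fin n) :
    (Finset.univ.filter (fun f : EdgeIdx n => f.1.1 = i ∨ f.1.2 = i)).card = n - 1 := by
  have hcard : (Finset.univ.filter (fun h : Fin n => h ≠ i)).card = n - 1 := by
    rw [Finset.filter_ne' Finset.univ i, Finset.card_erase_of_mem (Finset.mem_univ i)]
    simp
  rw [← hcard]
  apply Finset.card_bij' (fun (f : EdgeIdx n) _ => if f.1.1 = i then f.1.2 else f.1.1)
    (fun h hh => if hlt : i < h then ⟨(i, h), hlt⟩ else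
      ⟨(h, i), lt_of_le_of_ne (le_of_not_gt hlt) (by
        simpa using (Finset.mem_filter.mp hh).2)⟩)
  case hi =>
    intro f hf
    simp only [Finset.mem_filter, Finset.mem_univ, true_and] at hf ⊢
    by_cases h : f.1.1 = i
    · rw [if_pos h]
      intro hc
      have := f.2
      rw [hc, ← h] at this
      exact absurd this (lt_irrefl _)
    · rw [if_neg h]; exact h
  case hj =>
    intro h hh
    simp only [Finset.mem_filter, Finset.mem_univ, true_and]
    split_ifs with hlt
    · left; rfl
    · right; rfl
  case left_inv =>
    intro f hf
    simp only [Finset.mem_filter, Finset.mem_univ, true_and] at hf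
    by_cases h : f.1.1 = i
    · have hlt : i < f.1.2 := h ▸ f.2
      simp only [if_pos h, dif_pos hlt]
      exact Subtype.ext (Prod.ext h.symm rfl)
    · have h2 : f.1.2 = i := hf.resolve_left h
      have hlt2 : f.1.1 < i := h2 ▸ f.2
      simp only [if_neg h, dif_neg (asymm hlt2)]
      exact Subtype.ext (Prod.ext rfl h2.symm)
  case right_inv =>
    intro h hh
    have hne : h ≠ i := by simpa using (Finset.mem_filter.mp hh).2
    by_cases hlt : i < h
    · rw [dif_pos hlt]; simp [hlt.ne']
    · rw [dif_neg hlt]; simp [hne]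

lemma edgeCount_update (x : GraphCfg n) (e : EdgeIdx n) :
    edgeCount (Function.update x e true) = edgeCount (Function.update x e false) + 1 := by
  unfold edgeCount
  rw [← Finset.sum_erase_add _ _ (Finset.mem_univ e),
    ← Finset.sum_erase_add _ _ (Finset.mem_univ e)]
  have h1 : ∀ v : Bool,
      (∑ f ∈ Finset.univ.erase e, (if (Function.update x e v) f then (1 : ℝ) else 0)) =
      ∑ f ∈ Finset.univ.erase e, (if x f then (1 : ℝ) else 0) := by
    intro v
    apply Finset.sum_congr rfl
    intro f hf
    rw [Function.update_of_ne (Finset.ne_of_mem_erase hf)]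
  rw [h1, h1]
  simp [add_assoc]

lemma transEdges_update_ge (x : GraphCfg n) (e : EdgeIdx n) :
    transEdges (Function.update x e false) ≤ transEdges (Function.update x e true) := by
  rw [transEdges_eq_sum, transEdges_eq_sum]
  exact Finset.sum_le_sum fun f _ => tterm_mono (update_le x e) f

lemma transEdges_update_le (hn : 3 ≤ n) (x : GraphCfg n) (e : EdgeIdx n) :
    transEdges (Function.update x e true) ≤
      transEdges (Function.update x e false) + (2 * (n : ℝ) - 3) := by
  classical
  set A := Finset.univ.filter (fun f : EdgeIdx n => f.1.1 = e.1.1 ∨ f.1.2 = e.1.1) with hA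
  set B := Finset.univ.filter (fun f : EdgeIdx n => f.1.1 = e.1.2 ∨ f.1.2 = e.1.2) with hB
  have hcardA : A.card = n - 1 := card_incident e.1.1
  have hcardB : B.card = n - 1 := card_incident e.1.2
  have heAB : e ∈ A ∩ B := by
    refine Finset.mem_inter.mpr ⟨?_, ?_⟩ <;> simp [hA, hB]
  have hU : (A ∪ B).card ≤ 2 * n - 3 := by
    have h1 := Finset.card_union_add_card_inter A B
    have h2 : 1 ≤ (A ∩ B).card := Finset.card_pos.mpr ⟨e, heAB⟩
    omega
  have hUr : ((A ∪ B).card : ℝ) ≤ 2 * (n : ℝ) - 3 := by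
    have : ((A ∪ B).card : ℝ) ≤ ((2 * n - 3 : ℕ) : ℝ) := by exact_mod_cast hU
    refine this.trans ?_
    have h3 : 3 ≤ 2 * n := by omega
    push_cast [Nat.cast_sub h3]
    norm_num
  have hsub : A ∪ B ⊆ Finset.univ := Finset.subset_univ _
  rw [transEdges_eq_sum, transEdges_eq_sum,
    ← Finset.sum_sdiff hsub, ← Finset.sum_sdiff hsub]
  have heq : (∑ f ∈ Finset.univ \ (A ∪ B), tterm (Function.update x e true) f) =
      ∑ f ∈ Finset.univ \ (A ∪ B), tterm (Function.update x e false) f := by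
    apply Finset.sum_congr rfl
    intro f hf
    rw [Finset.mem_sdiff, Finset.mem_union] at hf
    simp only [hA, hB, Finset.mem_filter, Finset.mem_univ, true_and, not_or] at hf
    push_neg at hf
    exact tterm_update_of_untouched x e true false f (by tauto) (by tauto) (by tauto) (by tauto)
  rw [heq]
  have h4 : (∑ f ∈ A ∪ B, tterm (Function.update x e true) f) ≤ ((A ∪ B).card : ℝ) := by
    calc (∑ f ∈ A ∪ B, tterm (Function.update x e true) f)
        ≤ ∑ _f ∈ A ∪ B, (1 : ℝ) := Finset.sum_le_sum fun f _ => tterm_le_one _ f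
      _ = ((A ∪ B).card : ℝ) := by simp
  have h5 : (0 : ℝ) ≤ ∑ f ∈ A ∪ B, tterm (Function.update x e false) f :=
    Finset.sum_nonneg fun f _ => tterm_nonneg _ f
  linarith

end aux

/-- Bounds `α(θ) ≤ π_e(x) ≤ β(θ)` on conditional edge probabilities of the
exponential family generated by the numbers of edges and transitive edges with
`θ₂ ≥ 0` (used in the proof of Lemma D.8 of the paper):
`1/(1 + exp(−θ₁)) ≤ π_e(x) ≤ 1/(1 + exp(−θ₁ − θ₂·(2n − 3)))`. -/
theorem statement15 (n : ℕ) (hn : 3 ≤ n)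
    (θ₁ θ₂ : ℝ) (hθ₂ : 0 ≤ θ₂)
    (Z : ℝ)
    (hZ : Z = ∑ x : GraphCfg n, Real.exp (θ₁ * edgeCount x + θ₂ * transEdges x))
    (p : GraphCfg n → ℝ)
    (hp : ∀ x, p x = Real.exp (θ₁ * edgeCount x + θ₂ * transEdges x) / Z)
    (π : EdgeIdx n → GraphCfg n → ℝ)
    (hπ : ∀ e x, π e x =
      p (Function.update x e true) /
        (p (Function.update x e true) + p (Function.update x e false))) :
    ∀ (e : EdgeIdx n) (x : GraphCfg n),
      1 / (1 + Real.exp (-θ₁)) ≤ π e x ∧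
      π e x ≤ 1 / (1 + Real.exp (-θ₁ - θ₂ * (2 * (n : ℝ) - 3))) := by
  intro e x
  have hZpos : 0 < Z := by
    rw [hZ]
    exact Finset.sum_pos (fun y _ => Real.exp_pos _) Finset.univ_nonempty
  set D1 : ℝ := θ₁ * edgeCount (Function.update x e true) +
    θ₂ * transEdges (Function.update x e true) with hD1
  set D0 : ℝ := θ₁ * edgeCount (Function.update x e false) +
    θ₂ * transEdges (Function.update x e false) with hD0
  have hπval : π e x = 1 / (1 + Real.exp (D0 - D1)) := by
    have key : ∀ a b : ℝ, 0 < a → 0 < b → (a / Z) / (a / Z + b / Z) = 1 / (1 + b / a) := by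
      intro a b ha hb
      rw [← add_div, div_div_div_cancel_right₀ hZpos.ne']
      have h' : (a + b) / a = 1 + b / a := by rw [add_div, div_self ha.ne']
      rw [← h', one_div_div]
    rw [hπ, hp, hp, ← hD1, ← hD0, key _ _ (Real.exp_pos _) (Real.exp_pos _),
      ← Real.exp_sub]
  have hT0 : transEdges (Function.update x e false) ≤ transEdges (Function.update x e true) :=
    transEdges_update_ge x e
  have hT1 : transEdges (Function.update x e true) ≤
      transEdges (Function.update x e false) + (2 * (n : ℝ) - 3) :=
    transEdges_update_le hn x e
  have hEC : edgeCount (Function.update x e true) =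
      edgeCount (Function.update x e false) + 1 := edgeCount_update x e
  have hdiff1 : D0 - D1 ≤ -θ₁ := by
    have h1 : θ₂ * transEdges (Function.update x e false) ≤
        θ₂ * transEdges (Function.update x e true) :=
      mul_le_mul_of_nonneg_left hT0 hθ₂
    rw [hD0, hD1, hEC]
    nlinarith
  have hdiff2 : -θ₁ - θ₂ * (2 * (n : ℝ) - 3) ≤ D0 - D1 := by
    have h1 : θ₂ * transEdges (Function.update x e true) ≤
        θ₂ * (transEdges (Function.update x e false) + (2 * (n : ℝ) - 3)) :=
      mul_le_mul_of_nonneg_left hT1 hθ₂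
    rw [hD0, hD1, hEC]
    nlinarith
  have mono : ∀ s t : ℝ, s ≤ t → 1 / (1 + Real.exp t) ≤ 1 / (1 + Real.exp s) := by
    intro s t hst
    apply one_div_le_one_div_of_le (by positivity)
    exact add_le_add_right (Real.exp_le_exp.mpr hst) 1
  constructor
  · rw [hπval]
    exact mono _ _ hdiff1
  · rw [hπval]
    exact mono _ _ hdiff2
end

section
/- Let n ≥ 3, let E_n = {{i,j} : 1 ≤ i < j ≤ n}, and let T(x) = ∑_{i<j} x_{ij} · max_{h ≠ i,j} (x_{ih}·x_{jh}) denote the transitive-edge count of a configuration x ∈ {0,1}^{E_n}. Then T is Lipschitz with constant 2n − 3 with respect to the Hamming distance: for all x, y ∈ {0,1}^{E_n}, |T(x) − T(y)| ≤ (2n − 3) · d(x, y), where d(x, y) is the number of edges e ∈ E_n with x_e ≠ y_e. -/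
open scoped BigOperators

/-- `e` shares a vertex with `f`. -/
def shares {n : ℕ} (e f : EdgeIdx n) : Prop :=
  f.1.1 = e.1.1 ∨ f.1.1 = e.1.2 ∨ f.1.2 = e.1.1 ∨ f.1.2 = e.1.2

instance {n : ℕ} (e f : EdgeIdx n) : Decidable (shares e f) := by
  unfold shares; infer_instance

lemma edgeVal_congr {n : ℕ} (x y : GraphCfg n) (a h : Fin n)
    (hag : ∀ f : EdgeIdx n, (f.1.1 = a ∨ f.1.2 = a) → x f = y f) :
    edgeVal x a h = edgeVal y a h := by
  unfold edgeVal
  split_ifs with h1 h2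
  · exact hag _ (Or.inl rfl)
  · exact hag _ (Or.inr rfl)
  · rfl

lemma ind_congr {n : ℕ} (x y : GraphCfg n) (e : EdgeIdx n)
    (hag : ∀ f : EdgeIdx n, shares e f → x f = y f) :
    ((x e = true ∧ ∃ h : Fin n, h ≠ e.1.1 ∧ h ≠ e.1.2 ∧
        edgeVal x e.1.1 h = true ∧ edgeVal x e.1.2 h = true) ↔
     (y e = true ∧ ∃ h : Fin n, h ≠ e.1.1 ∧ h ≠ e.1.2 ∧
        edgeVal y e.1.1 h = true ∧ edgeVal y e.1.2 h = true)) := by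
  have h0 : x e = y e := hag e (Or.inl rfl)
  have h1 : ∀ h, edgeVal x e.1.1 h = edgeVal y e.1.1 h := fun h =>
    edgeVal_congr x y _ h (fun f hf => hag f (by unfold shares; tauto))
  have h2 : ∀ h, edgeVal x e.1.2 h = edgeVal y e.1.2 h := fun h =>
    edgeVal_congr x y _ h (fun f hf => hag f (by unfold shares; tauto))
  rw [h0]
  refine and_congr_right fun _ => exists_congr fun h => ?_
  rw [h1 h, h2 h]

def gmap {n : ℕ} (a b : Fin n) (e : EdgeIdx n) : Fin n × Bool :=
  if e.1.1 = a then (e.1.2, false) else if e.1.2 = a then (e.1.1, false)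
  else if e.1.1 = b then (e.1.2, true) else (e.1.1, true)

lemma edge_det {n : ℕ} (e1 e2 : EdgeIdx n) (u v : Fin n)
    (h1 : (e1.1.1 = u ∧ e1.1.2 = v) ∨ (e1.1.1 = v ∧ e1.1.2 = u))
    (h2 : (e2.1.1 = u ∧ e2.1.2 = v) ∨ (e2.1.1 = v ∧ e2.1.2 = u)) : e1 = e2 := by
  obtain ⟨⟨i1, j1⟩, hl1⟩ := e1
  obtain ⟨⟨i2, j2⟩, hl2⟩ := e2
  dsimp only at h1 h2 hl1 hl2
  simp only [Subtype.mk.injEq, Prod.mk.injEq, Fin.ext_iff, Fin.lt_def] at *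
  omega

lemma gmap_spec {n : ℕ} (a b : Fin n) (hab : a < b) (e : EdgeIdx n)
    (he : a = e.1.1 ∨ a = e.1.2 ∨ b = e.1.1 ∨ b = e.1.2) :
    (∃ w, gmap a b e = (w, false) ∧ ((e.1.1 = a ∧ e.1.2 = w) ∨ (e.1.1 = w ∧ e.1.2 = a)))
    ∨ (∃ w, gmap a b e = (w, true) ∧ ((e.1.1 = b ∧ e.1.2 = w) ∨ (e.1.1 = w ∧ e.1.2 = b))) := by
  unfold gmap
  split_ifs with hia hja hib
  · exact Or.inl ⟨e.1.2, rfl, Or.inl ⟨hia, rfl⟩⟩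
  · exact Or.inl ⟨e.1.1, rfl, Or.inr ⟨rfl, hja⟩⟩
  · exact Or.inr ⟨e.1.2, rfl, Or.inl ⟨hib, rfl⟩⟩
  · refine Or.inr ⟨e.1.1, rfl, Or.inr ⟨rfl, ?_⟩⟩
    rcases he with h | h | h | h
    · exact absurd h.symm hia
    · exact absurd h.symm hja
    · exact absurd h.symm hib
    · exact h.symm

lemma card_shares_le {n : ℕ} (f : EdgeIdx n) :
    (Finset.univ.filter (fun e : EdgeIdx n => shares e f)).card ≤ 2 * n - 3 := by
  obtain ⟨⟨a, b⟩, hab⟩ := f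
  simp only at hab
  set S : Finset (Fin n × Bool) :=
    ((Finset.univ.erase a) ×ˢ {false}) ∪ (((Finset.univ.erase a).erase b) ×ˢ {true}) with hS
  have hcard : S.card ≤ 2 * n - 3 := by
    have hb : b ∈ Finset.univ.erase a :=
      Finset.mem_erase.2 ⟨(ne_of_gt hab), Finset.mem_univ b⟩
    have h1 : ((Finset.univ.erase a) ×ˢ ({false} : Finset Bool)).card = n - 1 := by
      rw [Finset.card_product, Finset.card_erase_of_mem (Finset.mem_univ a)]
      simp
    have h2 : (((Finset.univ.erase a).erase b) ×ˢ ({true} : Finset Bool)).card = n - 2 := by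
      rw [Finset.card_product, Finset.card_erase_of_mem hb,
        Finset.card_erase_of_mem (Finset.mem_univ a)]
      simp; omega
    calc S.card ≤ _ + _ := Finset.card_union_le _ _
      _ ≤ 2 * n - 3 := by
          rw [h1, h2]
          have hbn : (b : ℕ) < n := b.isLt
          have habn : (a : ℕ) < (b : ℕ) := hab
          omega
  refine le_trans (Finset.card_le_card_of_injOn (gmap a b) ?_ ?_) hcard
  · rintro ⟨⟨i, j⟩, hij⟩ he
    simp only [Finset.mem_coe, Finset.mem_filter, Finset.mem_univ, true_and] at he; simp only [shares] at he
    simp only at hij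
    show gmap a b _ ∈ S
    unfold gmap
    simp only
    split_ifs with hia hja hib
    · refine Finset.mem_union_left _ ?_
      rw [Finset.mem_product]
      exact ⟨Finset.mem_erase.2 ⟨by rw [← hia]; exact (ne_of_gt hij), Finset.mem_univ _⟩,
        by simp⟩
    · refine Finset.mem_union_left _ ?_
      rw [Finset.mem_product]
      exact ⟨Finset.mem_erase.2 ⟨by rw [← hja]; exact (ne_of_lt hij), Finset.mem_univ _⟩,
        by simp⟩
    · refine Finset.mem_union_right _ ?_
      rw [Finset.mem_product]
      refine ⟨Finset.mem_erase.2 ⟨by rw [← hib]; exact (ne_of_gt hij),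
        Finset.mem_erase.2 ⟨hja, Finset.mem_univ _⟩⟩, by simp⟩
    · have hjb : j = b := by
        rcases he with h | h | h | h
        · exact absurd h.symm hia
        · exact absurd h.symm hja
        · exact absurd h.symm hib
        · exact h.symm
      refine Finset.mem_union_right _ ?_
      rw [Finset.mem_product]
      refine ⟨Finset.mem_erase.2 ⟨by rw [← hjb]; exact (ne_of_lt hij),
        Finset.mem_erase.2 ⟨hia, Finset.mem_univ _⟩⟩, by simp⟩
  · intro e1 he1 e2 he2 heq
    simp only [Finset.coe_filter, Set.mem_setOf_eq, Finset.mem_univ, true_and] at he1 he2; simp only [shares] at he1 he2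
    rcases gmap_spec a b hab e1 he1 with ⟨w1, hw1, hp1⟩ | ⟨w1, hw1, hp1⟩ <;>
      rcases gmap_spec a b hab e2 he2 with ⟨w2, hw2, hp2⟩ | ⟨w2, hw2, hp2⟩
    · rw [hw1, hw2, Prod.mk.injEq] at heq
      exact edge_det e1 e2 a w1 hp1 (heq.1 ▸ hp2)
    · rw [hw1, hw2, Prod.mk.injEq] at heq
      exact absurd heq.2 (by simp)
    · rw [hw1, hw2, Prod.mk.injEq] at heq
      exact absurd heq.2 (by simp)
    · rw [hw1, hw2, Prod.mk.injEq] at heq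
      exact edge_det e1 e2 b w1 hp1 (heq.1 ▸ hp2)

/-- Verification of smoothness condition [C.4*] for the edge-and-transitive-edge
model (Corollaries 2 and 3 of the paper): the transitive-edge count is Lipschitz
with constant `2n − 3` with respect to the Hamming distance on configurations. -/
theorem statement16 (n : ℕ) (hn : 3 ≤ n) (x y : GraphCfg n) :
    |transEdges x - transEdges y| ≤
      (2 * (n : ℝ) - 3) * ((Finset.univ.filter (fun e : EdgeIdx n => x e ≠ y e)).card : ℝ) := by
  classical
  set D := Finset.univ.filter (fun e : EdgeIdx n => x e ≠ y e) with hD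
  set A := Finset.univ.filter (fun e : EdgeIdx n => ∃ f ∈ D, shares e f) with hA
  have hstep : |transEdges x - transEdges y| ≤ (A.card : ℝ) := by
    rw [transEdges, transEdges, ← Finset.sum_sub_distrib]
    refine le_trans (Finset.abs_sum_le_sum_abs _ _) (le_trans (Finset.sum_le_sum
      (fun e _ => ?_ : ∀ e ∈ Finset.univ, _ ≤ if e ∈ A then (1:ℝ) else 0)) ?_)
    · by_cases heA : e ∈ A
      · simp only [heA, if_true]
        split_ifs <;> simp
      · simp only [heA, if_false]
        have hag : ∀ f : EdgeIdx n, shares e f → x f = y f := by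
          intro f hsf
          by_contra hne
          exact heA (Finset.mem_filter.2 ⟨Finset.mem_univ _,
            ⟨f, Finset.mem_filter.2 ⟨Finset.mem_univ _, hne⟩, hsf⟩⟩)
        rw [if_congr (ind_congr x y e hag) rfl rfl, sub_self, abs_zero]
    · rw [Finset.sum_ite_mem, Finset.univ_inter, Finset.sum_const, nsmul_eq_mul, mul_one]
  have hcast : ((2 * n - 3 : ℕ) : ℝ) = 2 * (n : ℝ) - 3 := by
    have h3 : 3 ≤ 2 * n := by omega
    push_cast [Nat.cast_sub h3]
    ring
  refine le_trans hstep ?_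
  rw [← hcast]
  have hAcard : A.card ≤ (2 * n - 3) * D.card := by
    have hsub : A ⊆ D.biUnion (fun f => Finset.univ.filter (fun e => shares e f)) := by
      intro e he
      obtain ⟨-, f, hf, hsf⟩ := Finset.mem_filter.1 he
      exact Finset.mem_biUnion.2 ⟨f, hf, Finset.mem_filter.2 ⟨Finset.mem_univ _, hsf⟩⟩
    calc A.card ≤ _ := Finset.card_le_card hsub
      _ ≤ ∑ f ∈ D, (Finset.univ.filter (fun e => shares e f)).card :=
          Finset.card_biUnion_le
      _ ≤ ∑ _f ∈ D, (2 * n - 3) := Finset.sum_le_sum (fun f _ => card_shares_le f)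
      _ = (2 * n - 3) * D.card := by rw [Finset.sum_const, smul_eq_mul, mul_comm]
  calc (A.card : ℝ) ≤ (((2 * n - 3) * D.card : ℕ) : ℝ) := by exact_mod_cast hAcard
    _ = ((2 * n - 3 : ℕ) : ℝ) * D.card := by push_cast; ring
end
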